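/- Let f₁ = z₁² + z₂³ + z₃z₄ and f₂ = z₃⁵ + z₄² + z₁z₂⁴ in ℂ[z₁,z₂,z₃,z₄]. Then for every nonzero point a ∈ ℂ⁴ with f₁(a) = f₂(a) = 0, the 2×4 Jacobian matrix ((∂f_i/∂z_j)(a)) has rank 2; that is, the surface {f₁ = f₂ = 0} ⊂ ℂ⁴ has an isolated singularity at the origin. -/
import Mathlib


open MvPolynomial

/-- A `2 × 4` matrix with a nonvanishing `2 × 2` minor has rank `2`. -/
lemma rank_two_of_minor {M : Matrix (Fin 2) (Fin 4) ℂ} (j k : Fin 4)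
    (h : M 0 j * M 1 k - M 0 k * M 1 j ≠ 0) : M.rank = 2 := by
  refine le_antisymm (by simpa using M.rank_le_card_height) ?_
  set g : Fin 2 → Fin 4 := ![j, k] with hg
  set B : Matrix (Fin 4) (Fin 2) ℂ := Matrix.of fun r c => if r = g c then 1 else 0 with hB
  have hMB : M * B = Matrix.of fun i c => M i (g c) := by
    ext i c
    simp [hB, Matrix.mul_apply]
  have hdet : (M * B).det ≠ 0 := by
    rw [hMB, Matrix.det_fin_two]
    simpa [hg] using h
  have h2 : (M * B).rank = 2 := by
    simpa using Matrix.rank_of_isUnit (M * B)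
      ((Matrix.isUnit_iff_isUnit_det _).mpr hdet.isUnit)
  calc (2 : ℕ) = (M * B).rank := h2.symm
    _ ≤ M.rank := Matrix.rank_mul_le_left M B

/-- Algebraic core: if all six `2×2` minors vanish at a common zero, the point is `0`. -/
lemma minors_vanish_forces_zero (a0 a1 a2 a3 : ℂ)
    (e1 : a0 ^ 2 + a1 ^ 3 + a2 * a3 = 0)
    (e2 : a2 ^ 5 + a3 ^ 2 + a0 * a1 ^ 4 = 0)
    (m01 : 2 * a0 * (4 * a0 * a1 ^ 3) - 3 * a1 ^ 2 * a1 ^ 4 = 0)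
    (m02 : 2 * a0 * (5 * a2 ^ 4) - a3 * a1 ^ 4 = 0)
    (m03 : 2 * a0 * (2 * a3) - a2 * a1 ^ 4 = 0)
    (m12 : 3 * a1 ^ 2 * (5 * a2 ^ 4) - a3 * (4 * a0 * a1 ^ 3) = 0)
    (m13 : 3 * a1 ^ 2 * (2 * a3) - a2 * (4 * a0 * a1 ^ 3) = 0)
    (m23 : a3 * (2 * a3) - a2 * (5 * a2 ^ 4) = 0) :
    a0 = 0 ∧ a1 = 0 ∧ a2 = 0 ∧ a3 = 0 := by
  have h0 : a0 ^ 4 = 0 := by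
    linear_combination ((-63/187 : ℂ)*a2*a3 + (-3/11 : ℂ)*a1^3 + a0^2) * e1 +
      ((45/187 : ℂ)*a2^2) * e2 + ((-1/11 : ℂ)) * m01 + ((-31/187 : ℂ)*a0*a2) * m03 +
      ((19/187 : ℂ)*a1*a2) * m13 + ((9/187 : ℂ)*a2^2) * m23
  have h1 : a1 ^ 6 = 0 := by
    linear_combination ((-448/187 : ℂ)*a2*a3 + (8/11 : ℂ)*a1^3) * e1 +
      ((320/187 : ℂ)*a2^2) * e2 + ((-1/11 : ℂ)) * m01 + ((112/187 : ℂ)*a0*a2) * m03 +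
      ((52/187 : ℂ)*a1*a2) * m13 + ((64/187 : ℂ)*a2^2) * m23
  have h2 : a2 ^ 6 = 0 := by
    linear_combination ((-24/17 : ℂ)*a3) * e1 + ((22/17 : ℂ)*a2) * e2 +
      ((6/17 : ℂ)*a0) * m03 + ((4/17 : ℂ)*a1) * m13 + ((1/17 : ℂ)*a2) * m23
  have h3 : a3 ^ 3 = 0 := by
    linear_combination ((-40/17 : ℂ)*a0*a1*a3) * e1 +
      ((5/7 : ℂ)*a3 + (200/119 : ℂ)*a0*a1*a2) * e2 + ((10/17 : ℂ)*a0^2*a1) * m03 +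
      ((65/238 : ℂ)*a0*a1^2) * m13 + ((1/7 : ℂ)*a3 + (40/119 : ℂ)*a0*a1*a2) * m23
  exact ⟨by simpa using pow_eq_zero_iff (n := 4) (by norm_num) |>.mp h0,
    by simpa using pow_eq_zero_iff (n := 6) (by norm_num) |>.mp h1,
    by simpa using pow_eq_zero_iff (n := 6) (by norm_num) |>.mp h2,
    by simpa using pow_eq_zero_iff (n := 3) (by norm_num) |>.mp h3⟩

/-- For `f₁ = z₁² + z₂³ + z₃z₄` and `f₂ = z₃⁵ + z₄² + z₁z₂⁴` in `ℂ[z₁,z₂,z₃,z₄]`,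
at every nonzero common zero `a` the `2 × 4` Jacobian matrix `((∂fᵢ/∂zⱼ)(a))`
has rank `2`: the splice-type surface `{f₁ = f₂ = 0} ⊂ ℂ⁴` has an isolated
singularity at the origin. -/
theorem splice_surface_isolated_singularity
    (f : Fin 2 → MvPolynomial (Fin 4) ℂ)
    (hf1 : f 0 = X 0 ^ 2 + X 1 ^ 3 + X 2 * X 3)
    (hf2 : f 1 = X 2 ^ 5 + X 3 ^ 2 + X 0 * X 1 ^ 4)
    (a : Fin 4 → ℂ) (ha : a ≠ 0)
    (hzero : ∀ i : Fin 2, eval a (f i) = 0) :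
    Matrix.rank (Matrix.of fun (i : Fin 2) (j : Fin 4) =>
      eval a (pderiv j (f i))) = 2 := by
  have e1 : a 0 ^ 2 + a 1 ^ 3 + a 2 * a 3 = 0 := by
    have := hzero 0; rw [hf1] at this; simpa using this
  have e2 : a 2 ^ 5 + a 3 ^ 2 + a 0 * a 1 ^ 4 = 0 := by
    have := hzero 1; rw [hf2] at this; simpa using this
  have hM : (Matrix.of fun (i : Fin 2) (j : Fin 4) => eval a (pderiv j (f i))) =
      !![2 * a 0, 3 * a 1 ^ 2, a 3, a 2;
         a 1 ^ 4, 4 * a 0 * a 1 ^ 3, 5 * a 2 ^ 4, 2 * a 3] := by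
    ext i j
    fin_cases i <;> fin_cases j <;>
      simp [hf1, hf2, pderiv_mul, pderiv_pow] <;> ring
  rw [hM]
  set M := !![2 * a 0, 3 * a 1 ^ 2, a 3, a 2;
       a 1 ^ 4, 4 * a 0 * a 1 ^ 3, 5 * a 2 ^ 4, 2 * a 3] with hMdef
  by_contra hrank
  have hmin : ∀ j k : Fin 4, M 0 j * M 1 k - M 0 k * M 1 j = 0 := by
    intro j k
    by_contra h
    exact hrank (rank_two_of_minor j k h)
  have m01 := hmin 0 1
  have m02 := hmin 0 2
  have m03 := hmin 0 3
  have m12 := hmin 1 2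
  have m13 := hmin 1 3
  have m23 := hmin 2 3
  simp only [hMdef, Matrix.cons_val', Matrix.cons_val_zero, Matrix.cons_val_one,
    Matrix.head_cons, Matrix.empty_val', Matrix.cons_val_fin_one, Matrix.head_fin_const,
    Matrix.cons_val_two, Matrix.tail_cons, Matrix.cons_val_three] at m01 m02 m03 m12 m13 m23
  obtain ⟨h0, h1, h2, h3⟩ := minors_vanish_forces_zero (a 0) (a 1) (a 2) (a 3)
    e1 e2 m01 m02 m03 m12 m13 m23
  apply ha
  funext i
  fin_cases i <;> assumption
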